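/- Let (Ω, m₀, μ) be a probability space and let m₁ ⊆ m₂ ⊆ m₀ be sub-σ-algebras. Let F, G : Ω → ℝ be square-integrable with respect to μ, suppose F is m₂-measurable, and suppose the conditional expectation μ[G | m₂] is almost everywhere equal to an m₁-measurable function. Then ∫ F·G dμ = ∫ μ[F | m₁]·μ[G | m₂] dμ. -/

import Mathlib

open MeasureTheory


open MeasureTheory in
lemma memLp_two_condexp_aux {Ω : Type*} {m0 : MeasurableSpace Ω} {μ : Measure Ω}
    [IsProbabilityMeasure μ] {m : MeasurableSpace Ω} (hm : m ≤ m0) {f : Ω → ℝ}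
    (hf : MemLp f 2 μ) : MemLp (μ[f|m]) 2 μ := by
  set fL := hf.toLp f with hfLdef
  have hfL : fL =ᵐ[μ] f := hf.coeFn_toLp
  have hcond : (condExpL2 ℝ ℝ hm fL : Ω → ℝ) =ᵐ[μ] μ[f|m] := by
    refine ae_eq_condExp_of_forall_setIntegral_eq hm (hf.integrable (by norm_num)) ?_ ?_ ?_
    · intro s _ hμs
      exact integrableOn_condExpL2_of_measure_ne_top hm hμs.ne fL
    · intro s hs hμs
      rw [integral_condExpL2_eq_of_fin_meas_real fL hs hμs.ne]
      exact integral_congr_ae (ae_restrict_of_ae hfL)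
    · exact lpMeas.aestronglyMeasurable (condExpL2 ℝ ℝ hm fL)
  exact (Lp.memLp _).ae_eq hcond

/-- If `m₁ ⊆ m₂` are sub-σ-algebras, `F, G` are square-integrable, `F` is `m₂`-measurable and
`μ[G | m₂]` is a.e. equal to an `m₁`-measurable function, then
`∫ F·G dμ = ∫ μ[F | m₁] · μ[G | m₂] dμ`. -/
theorem stmt_2 {Ω : Type*} {m₀ : MeasurableSpace Ω} {μ : Measure Ω} [IsProbabilityMeasure μ]
    {m₁ m₂ : MeasurableSpace Ω} (h12 : m₁ ≤ m₂) (h20 : m₂ ≤ m₀)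
    (F G : Ω → ℝ) (hF : MemLp F 2 μ) (hG : MemLp G 2 μ)
    (hFmeas : Measurable[m₂] F)
    (hGcond : ∃ g : Ω → ℝ, Measurable[m₁] g ∧ μ[G|m₂] =ᵐ[μ] g) :
    ∫ ω, F ω * G ω ∂μ = ∫ ω, (μ[F|m₁]) ω * (μ[G|m₂]) ω ∂μ := by
  obtain ⟨g, hgmeas, hgae⟩ := hGcond
  have h10 : m₁ ≤ m₀ := h12.trans h20
  have hmul : ∀ {f h : Ω → ℝ}, MemLp f 2 μ → MemLp h 2 μ → Integrable (f * h) μ := by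
    intro f h hf hh
    have := hh.smul hf (p := 2) (q := 2) (r := 1) (hpqr := ⟨by simp [one_div, ENNReal.inv_two_add_inv_two]⟩)
    simpa [smul_eq_mul] using this.integrable le_rfl
  have hFG : Integrable (F * G) μ := hmul hF hG
  have hGi : Integrable G μ := hG.integrable (by norm_num)
  have hFi : Integrable F μ := hF.integrable (by norm_num)
  have hcondG2 : MemLp (μ[G|m₂]) 2 μ := memLp_two_condexp_aux h20 hG
  have hg2 : MemLp g 2 μ := hcondG2.ae_eq hgae
  -- step 1 : ∫ F G = ∫ F * μ[G|m₂]
  have step1 : ∫ ω, F ω * G ω ∂μ = ∫ ω, F ω * (μ[G|m₂]) ω ∂μ := by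
    have h1 : μ[F * G|m₂] =ᵐ[μ] F * μ[G|m₂] :=
      condExp_mul_of_stronglyMeasurable_left hFmeas.stronglyMeasurable hFG hGi
    calc ∫ ω, F ω * G ω ∂μ = ∫ ω, (μ[F * G|m₂]) ω ∂μ := (integral_condExp h20 (f := F * G)).symm
      _ = ∫ ω, F ω * (μ[G|m₂]) ω ∂μ := integral_congr_ae h1
  -- step 2 : ∫ F * μ[G|m₂] = ∫ μ[F|m₁] * μ[G|m₂]
  have hgF : Integrable (g * F) μ := hmul hg2 hF
  have h2 : μ[g * F|m₁] =ᵐ[μ] g * μ[F|m₁] :=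
    condExp_mul_of_stronglyMeasurable_left hgmeas.stronglyMeasurable hgF hFi
  calc ∫ ω, F ω * G ω ∂μ = ∫ ω, F ω * (μ[G|m₂]) ω ∂μ := step1
    _ = ∫ ω, g ω * F ω ∂μ := by
        refine integral_congr_ae ?_
        filter_upwards [hgae] with ω hω; rw [hω, mul_comm]
    _ = ∫ ω, (μ[g * F|m₁]) ω ∂μ := (integral_condExp h10 (f := g * F)).symm
    _ = ∫ ω, g ω * (μ[F|m₁]) ω ∂μ := integral_congr_ae h2
    _ = ∫ ω, (μ[F|m₁]) ω * (μ[G|m₂]) ω ∂μ := by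
        refine integral_congr_ae ?_
        filter_upwards [hgae] with ω hω; rw [hω, mul_comm]
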